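/- (Erdős–Goodman–Pósa) For every graph G on n vertices, the edge clique cover number satisfies θ_e(G) ≤ ⌊n²/4⌋, with equality if and only if G is isomorphic to the Turán graph T(n,2), the complete bipartite graph K_{⌊n/2⌋,⌈n/2⌉}. -/

import Mathlib

/-- A set of cliques `𝒞` is an edge clique cover of `G` if every clique in `𝒞` is a clique
of `G` and every edge of `G` is contained in some member of `𝒞`. -/
def IsEdgeCliqueCover {V : Type*} (G : SimpleGraph V) (𝒞 : Finset (Finset V)) : Prop :=
  (∀ K ∈ 𝒞, G.IsClique (K : Set V)) ∧ ∀ u v : V, G.Adj u v → ∃ K ∈ 𝒞, u ∈ K ∧ v ∈ K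

/-- The edge clique cover number `θ_e(G)`: the minimum number of cliques needed to cover
all edges of `G`. -/
noncomputable def edgeCliqueCoverNumber {V : Type*} (G : SimpleGraph V) : ℕ :=
  sInf {m : ℕ | ∃ 𝒞 : Finset (Finset V), IsEdgeCliqueCover G 𝒞 ∧ 𝒞.card = m}

open Finset SimpleGraph

section Aux

variable {V : Type*}


lemma count_fin_filter (n : ℕ) (p : ℕ → Prop) [DecidablePred p] :
    (univ.filter (fun i : Fin n => p i.val)).card = ((Finset.range n).filter p).card := by
  apply Finset.card_bij (fun i _ => i.val)
  · intro a ha; simp at ha ⊢; exact ha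
  · intro a _ b _ h; exact Fin.ext h
  · intro b hb; simp at hb; exact ⟨⟨b, hb.1⟩, by simp [hb.2]⟩

lemma count_odd_range (n : ℕ) : ((Finset.range n).filter (fun x => x % 2 = 1)).card = n / 2 := by
  induction n with
  | zero => simp
  | succ n ih =>
    rw [Finset.range_add_one, Finset.filter_insert]
    by_cases h : n % 2 = 1
    · rw [if_pos h, Finset.card_insert_of_notMem (by simp), ih]; omega
    · rw [if_neg h, ih]; omega

lemma prod_halves (n : ℕ) : (n - n / 2) * (n / 2) = n ^ 2 / 4 := by
  rcases Nat.even_or_odd n with ⟨k, hk⟩ | ⟨k, hk⟩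
  · subst hk
    have h1 : k + k - (k + k) / 2 = k := by omega
    have h2 : (k + k) / 2 = k := by omega
    have h3 : (k + k) ^ 2 = 4 * (k * k) := by ring
    rw [h1, h2, h3, Nat.mul_div_cancel_left _ (by norm_num)]
  · subst hk
    have h2 : (2 * k + 1) / 2 = k := by omega
    have h1 : 2 * k + 1 - (2 * k + 1) / 2 = k + 1 := by omega
    have h3 : (2 * k + 1) ^ 2 = 4 * (k * k + k) + 1 := by ring
    rw [h1, h2, h3]
    have h4 : (4 * (k * k + k) + 1) / 4 = k * k + k := by omega
    rw [h4]; ring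

lemma turan2_card_edges (n : ℕ) : (turanGraph n 2).edgeFinset.card = n ^ 2 / 4 := by
  have key := SimpleGraph.sum_degrees_eq_twice_card_edges (turanGraph n 2)
  have hc1 : (univ.filter (fun w : Fin n => (w:ℕ) % 2 = 1)).card = n / 2 := by
    have h := count_fin_filter n (fun x => x % 2 = 1)
    rw [count_odd_range] at h
    exact h
  have hc0 : (univ.filter (fun w : Fin n => ¬((w:ℕ) % 2 = 1))).card = n - n / 2 := by
    have := Finset.card_filter_add_card_filter_not
      (s := (univ : Finset (Fin n))) (p := fun w : Fin n => (w:ℕ) % 2 = 1)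
    rw [Finset.card_univ, Fintype.card_fin] at this
    omega
  have hdeg : ∀ v : Fin n, (turanGraph n 2).degree v =
      (univ.filter (fun w : Fin n => ¬((w:ℕ) % 2 = (v:ℕ) % 2))).card := by
    intro v
    rw [degree, neighborFinset_eq_filter]
    congr 1
    ext w
    simp only [mem_filter, turanGraph_adj]
    constructor
    · rintro ⟨h1, h2⟩; exact ⟨h1, fun hh => h2 (by omega)⟩
    · rintro ⟨h1, h2⟩; exact ⟨h1, fun hh => h2 (by omega)⟩
  have hsum : ∑ v : Fin n, (turanGraph n 2).degree v = 2 * ((n - n/2) * (n/2)) := by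
    rw [← Finset.sum_filter_add_sum_filter_not univ (fun v : Fin n => (v:ℕ) % 2 = 1)]
    have e1 : ∀ v ∈ univ.filter (fun v : Fin n => (v:ℕ) % 2 = 1),
        (turanGraph n 2).degree v = n - n / 2 := by
      intro v hv
      simp only [mem_filter] at hv
      rw [hdeg v, ← hc0]
      congr 1; ext w
      simp only [mem_filter, mem_univ, true_and, hv.2]
    have e2 : ∀ v ∈ univ.filter (fun v : Fin n => ¬((v:ℕ) % 2 = 1)),
        (turanGraph n 2).degree v = n / 2 := by
      intro v hv
      simp only [mem_filter] at hv
      have hv2 : (v:ℕ) % 2 = 0 := by omega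
      rw [hdeg v, ← hc1]
      congr 1; ext w
      simp only [mem_filter, mem_univ, true_and, hv2]
      omega
    rw [Finset.sum_congr rfl e1, Finset.sum_congr rfl e2, Finset.sum_const, Finset.sum_const,
      hc1, hc0, smul_eq_mul, smul_eq_mul]
    ring
  rw [hsum] at key
  have := prod_halves n
  omega

variable {V : Type*}

lemma step_lemma [Fintype V] [DecidableEq V] (G : SimpleGraph V) [DecidableRel G.Adj]
    {u v : V} (huv : G.Adj u v) {m : ℕ}
    (h : ∃ 𝒟 : Finset (Finset ↥(↑((univ : Finset V) \ {u, v}) : Set V)),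
      IsEdgeCliqueCover (G.induce ↑((univ : Finset V) \ {u, v})) 𝒟 ∧ 𝒟.card ≤ m) :
    (∃ 𝒞, IsEdgeCliqueCover G 𝒞 ∧ 𝒞.card ≤ m + (Fintype.card V - 2) + 1) ∧
    (∀ w, G.Adj u w → G.Adj v w →
      ∃ 𝒞, IsEdgeCliqueCover G 𝒞 ∧ 𝒞.card ≤ m + (Fintype.card V - 2)) := by
  classical
  set s : Finset V := (univ : Finset V) \ {u, v} with hsdef
  have hs : ∀ x, x ∈ s ↔ x ≠ u ∧ x ≠ v := by intro x; simp [hsdef]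
  obtain ⟨𝒟, ⟨hclq, hcov⟩, hcard⟩ := h
  set 𝒟' : Finset (Finset V) := 𝒟.image (fun K => K.image Subtype.val) with h𝒟'
  set f : V → Finset V := fun x =>
    if G.Adj u x ∧ G.Adj v x then {u, v, x} else if G.Adj u x then {u, x} else {v, x} with hf
  set S : Finset V := s.filter (fun x => G.Adj u x ∨ G.Adj v x) with hS
  set 𝒞₀ : Finset (Finset V) := 𝒟' ∪ S.image f with h𝒞₀
  -- cliques
  have hclq0 : ∀ K ∈ 𝒞₀, G.IsClique (K : Set V) := by
    intro K hK
    rw [h𝒞₀, mem_union] at hK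
    rcases hK with hK | hK
    · rw [h𝒟', mem_image] at hK
      obtain ⟨L, hL, rfl⟩ := hK
      intro a ha b hb hab
      simp only [coe_image, Set.mem_image, mem_coe] at ha hb
      obtain ⟨a', ha', rfl⟩ := ha
      obtain ⟨b', hb', rfl⟩ := hb
      have := hclq L hL ha' hb' (fun hh => hab (by rw [hh]))
      exact this
    · rw [mem_image] at hK
      obtain ⟨x, hx, rfl⟩ := hK
      rw [hS, mem_filter] at hx
      obtain ⟨hxs, hadj⟩ := hx
      rw [hs] at hxs
      rw [hf]
      by_cases h1 : G.Adj u x ∧ G.Adj v x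
      · simp only [if_pos h1]
        have : G.IsNClique 3 {u, v, x} := is3Clique_triple_iff.2 ⟨huv, h1.1, h1.2⟩
        simpa using this.1
      · simp only [if_neg h1]
        by_cases h2 : G.Adj u x
        · simp only [if_pos h2]
          simp only [coe_insert, coe_singleton]
          exact isClique_pair.2 (fun _ => h2)
        · simp only [if_neg h2]
          have h3 : G.Adj v x := by tauto
          simp only [coe_insert, coe_singleton]
          exact isClique_pair.2 (fun _ => h3)
  -- coverage of edges touching u or v (other than uv)
  have hhalf : ∀ a b, G.Adj a b → (a = u ∨ a = v) → b ≠ u → b ≠ v →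
      ∃ K ∈ 𝒞₀, a ∈ K ∧ b ∈ K := by
    intro a b hab ha hbu hbv
    have hbS : b ∈ S := by
      rw [hS, mem_filter, hs]
      refine ⟨⟨hbu, hbv⟩, ?_⟩
      rcases ha with rfl | rfl
      · exact Or.inl hab
      · exact Or.inr hab
    refine ⟨f b, by rw [h𝒞₀, mem_union]; exact Or.inr (mem_image_of_mem f hbS), ?_⟩
    rw [hf]
    rcases ha with rfl | rfl
    · by_cases h1 : G.Adj a b ∧ G.Adj v b
      · simp only [if_pos h1]; simp
      · simp only [if_neg h1, if_pos hab]; simp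
    · by_cases h1 : G.Adj u b ∧ G.Adj a b
      · simp only [if_pos h1]; simp
      · have h2 : ¬ G.Adj u b := fun hh => h1 ⟨hh, hab⟩
        simp only [if_neg h1, if_neg h2]; simp
  have hsc : s.card = Fintype.card V - 2 := by
    rw [hsdef, card_sdiff_of_subset (subset_univ _), card_univ, card_pair huv.ne]
  have hcard0 : 𝒞₀.card ≤ m + (Fintype.card V - 2) := by
    refine (card_union_le _ _).trans (add_le_add (card_image_le.trans hcard) ?_)
    refine card_image_le.trans ?_
    rw [hS, ← hsc]
    exact card_filter_le _ _
  have hcovmain : ∀ a b, G.Adj a b → ¬(a = u ∧ b = v) → ¬(a = v ∧ b = u) →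
      ∃ K ∈ 𝒞₀, a ∈ K ∧ b ∈ K := by
    intro a b hab h1 h2
    by_cases hau : a = u ∨ a = v
    · refine hhalf a b hab hau ?_ ?_
      · rintro rfl
        rcases hau with rfl | rfl
        · exact G.irrefl hab
        · exact h2 ⟨rfl, rfl⟩
      · rintro rfl
        rcases hau with rfl | rfl
        · exact h1 ⟨rfl, rfl⟩
        · exact G.irrefl hab
    · push_neg at hau
      by_cases hbu : b = u ∨ b = v
      · obtain ⟨K, hK, hbK, haK⟩ := hhalf b a hab.symm hbu hau.1 hau.2
        exact ⟨K, hK, haK, hbK⟩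
      · push_neg at hbu
        have haS : a ∈ (↑s : Set V) := by rw [Finset.mem_coe, hs]; exact hau
        have hbS : b ∈ (↑s : Set V) := by rw [Finset.mem_coe, hs]; exact hbu
        have hadj' : (G.induce ↑s).Adj ⟨a, haS⟩ ⟨b, hbS⟩ := hab
        obtain ⟨K, hK, haK, hbK⟩ := hcov _ _ hadj'
        refine ⟨K.image Subtype.val, ?_, ?_, ?_⟩
        · rw [h𝒞₀, mem_union]
          exact Or.inl (mem_image_of_mem _ hK)
        · exact mem_image_of_mem _ haK
        · exact mem_image_of_mem _ hbK
  constructor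
  · refine ⟨insert ({u, v} : Finset V) 𝒞₀, ⟨?_, ?_⟩, ?_⟩
    · intro K hK
      rcases mem_insert.1 hK with rfl | hK
      · simp only [coe_insert, coe_singleton]
        exact isClique_pair.2 (fun _ => huv)
      · exact hclq0 K hK
    · intro a b hab
      by_cases h1 : a = u ∧ b = v
      · exact ⟨{u, v}, mem_insert_self _ _, by simp [h1.1, h1.2]⟩
      by_cases h2 : a = v ∧ b = u
      · exact ⟨{u, v}, mem_insert_self _ _, by simp [h2.1, h2.2]⟩
      obtain ⟨K, hK, haK, hbK⟩ := hcovmain a b hab h1 h2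
      exact ⟨K, mem_insert_of_mem hK, haK, hbK⟩
    · refine (card_insert_le _ _).trans ?_
      omega
  · intro w hw1 hw2
    have hwS : w ∈ S := by
      rw [hS, mem_filter, hs]
      exact ⟨⟨hw1.ne', hw2.ne'⟩, Or.inl hw1⟩
    have hfw : f w = {u, v, w} := by
      simp only [hf, if_pos (And.intro hw1 hw2)]
    have hfwmem : f w ∈ 𝒞₀ := by
      rw [h𝒞₀, mem_union]
      exact Or.inr (mem_image_of_mem f hwS)
    refine ⟨𝒞₀, ⟨hclq0, ?_⟩, hcard0⟩
    intro a b hab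
    by_cases h1 : a = u ∧ b = v
    · exact ⟨f w, hfwmem, by rw [hfw]; simp [h1.1, h1.2]⟩
    by_cases h2 : a = v ∧ b = u
    · exact ⟨f w, hfwmem, by rw [hfw]; simp [h2.1, h2.2]⟩
    exact hcovmain a b hab h1 h2


lemma quarter_step (k : ℕ) : (k + 2) ^ 2 / 4 = k ^ 2 / 4 + (k + 1) := by
  have h : (k + 2) ^ 2 = k ^ 2 + 4 * (k + 1) := by ring
  rw [h, Nat.add_mul_div_left _ _ (by norm_num : (0:ℕ) < 4)]

universe u

lemma cover_exists (n : ℕ) : ∀ (V : Type u) [Fintype V] (G : SimpleGraph V),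
    Fintype.card V = n →
    (∃ 𝒞 : Finset (Finset V), IsEdgeCliqueCover G 𝒞 ∧ 𝒞.card ≤ n ^ 2 / 4) ∧
    (∀ u v w : V, G.Adj u v → G.Adj u w → G.Adj v w →
      ∃ 𝒞 : Finset (Finset V), IsEdgeCliqueCover G 𝒞 ∧ 𝒞.card + 1 ≤ n ^ 2 / 4) := by
  induction n using Nat.strong_induction_on with
  | _ n IH =>
    intro V _ G hn
    classical
    have main : ∀ u v : V, G.Adj u v →
        (∃ 𝒞 : Finset (Finset V), IsEdgeCliqueCover G 𝒞 ∧
          𝒞.card ≤ (n - 2) ^ 2 / 4 + (n - 2) + 1) ∧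
        (∀ w : V, G.Adj u w → G.Adj v w →
          ∃ 𝒞 : Finset (Finset V), IsEdgeCliqueCover G 𝒞 ∧
            𝒞.card ≤ (n - 2) ^ 2 / 4 + (n - 2)) := by
      intro u v huv
      have hn2 : 2 ≤ n := by
        have h := Finset.card_le_card (subset_univ ({u, v} : Finset V))
        rw [card_pair huv.ne, card_univ, hn] at h
        exact h
      set s : Finset V := (univ : Finset V) \ {u, v} with hsdef
      have hcard2 : Fintype.card ↥(↑s : Set V) = n - 2 := by
        simp only [Fintype.card_coe, Finset.coe_sort_coe]
        rw [hsdef, card_sdiff_of_subset (subset_univ _), card_univ, card_pair huv.ne, hn]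
      obtain ⟨⟨𝒟, hD, hDc⟩, -⟩ :=
        IH (n - 2) (by omega) ↥(↑s : Set V) (G.induce ↑s) hcard2
      have hstep := step_lemma G huv ⟨𝒟, hD, hDc⟩
      rw [hn] at hstep
      exact hstep
    constructor
    · by_cases hE : ∃ u v : V, G.Adj u v
      · obtain ⟨u, v, huv⟩ := hE
        obtain ⟨𝒞, hC, hCc⟩ := (main u v huv).1
        have hn2 : 2 ≤ n := by
          have h := Finset.card_le_card (subset_univ ({u, v} : Finset V))
          rw [card_pair huv.ne, card_univ, hn] at h
          exact h
        have hq : n ^ 2 / 4 = (n - 2) ^ 2 / 4 + (n - 2 + 1) := by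
          have := quarter_step (n - 2)
          rwa [show n - 2 + 2 = n from by omega] at this
        exact ⟨𝒞, hC, by omega⟩
      · push_neg at hE
        exact ⟨∅, ⟨by simp, fun u v h => absurd h (hE u v)⟩, by simp⟩
    · intro u v w h1 h2 h3
      obtain ⟨𝒞, hC, hCc⟩ := (main u v h1).2 w h2 h3
      have hn2 : 2 ≤ n := by
        have h := Finset.card_le_card (subset_univ ({u, v} : Finset V))
        rw [card_pair h1.ne, card_univ, hn] at h
        exact h
      have hq : n ^ 2 / 4 = (n - 2) ^ 2 / 4 + (n - 2 + 1) := by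
        have := quarter_step (n - 2)
        rwa [show n - 2 + 2 = n from by omega] at this
      exact ⟨𝒞, hC, by omega⟩


lemma ecc_le (G : SimpleGraph V) {𝒞 : Finset (Finset V)} (h : IsEdgeCliqueCover G 𝒞) :
    edgeCliqueCoverNumber G ≤ 𝒞.card :=
  Nat.sInf_le ⟨𝒞, h, rfl⟩

lemma exists_ecc_cover (G : SimpleGraph V) (h : ∃ 𝒞, IsEdgeCliqueCover G 𝒞) :
    ∃ 𝒞, IsEdgeCliqueCover G 𝒞 ∧ 𝒞.card = edgeCliqueCoverNumber G := by
  obtain ⟨𝒞, h⟩ := h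
  exact Nat.sInf_mem (⟨𝒞.card, 𝒞, h, rfl⟩ :
    {m : ℕ | ∃ 𝒞 : Finset (Finset V), IsEdgeCliqueCover G 𝒞 ∧ 𝒞.card = m}.Nonempty)

/-- The pair finset of an unordered pair. -/
noncomputable def pairFinset [DecidableEq V] : Sym2 V → Finset V :=
  Sym2.lift ⟨fun a b => {a, b}, fun a b => Finset.pair_comm a b⟩

lemma edge_cover [Fintype V] [DecidableEq V] (G : SimpleGraph V) [DecidableRel G.Adj] :
    IsEdgeCliqueCover G (G.edgeFinset.image pairFinset) ∧
      (G.edgeFinset.image pairFinset).card ≤ G.edgeFinset.card := by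
  refine ⟨⟨?_, ?_⟩, card_image_le⟩
  · intro K hK
    rw [mem_image] at hK
    obtain ⟨e, he, rfl⟩ := hK
    revert he
    induction e using Sym2.ind with
    | _ a b =>
      intro he
      have hab : G.Adj a b := by simpa using he
      have : pairFinset s(a, b) = ({a, b} : Finset V) := by simp [pairFinset]
      rw [this]
      simp only [coe_insert, coe_singleton]
      exact isClique_pair.2 (fun _ => hab)
  · intro a b hab
    refine ⟨pairFinset s(a, b), mem_image_of_mem _ (by simpa using hab), ?_⟩
    simp [pairFinset]

lemma no_two_edges [DecidableEq V] (G : SimpleGraph V) (hcf : G.CliqueFree 3) {K : Finset V}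
    (hK : G.IsClique (K : Set V)) {a b c d : V} (hab : G.Adj a b) (hcd : G.Adj c d)
    (ha : a ∈ K) (hb : b ∈ K) (hc : c ∈ K) (hd : d ∈ K) : s(a, b) = s(c, d) := by
  have tri : ∀ x y z : V, G.Adj x y → x ∈ K → y ∈ K → z ∈ K → z ≠ x → z ≠ y → False := by
    intro x y z hxy hx hy hz hzx hzy
    exact hcf {x, y, z} (is3Clique_triple_iff.2
      ⟨hxy, hK (Finset.mem_coe.2 hx) (Finset.mem_coe.2 hz) (Ne.symm hzx),
        hK (Finset.mem_coe.2 hy) (Finset.mem_coe.2 hz) (Ne.symm hzy)⟩)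
  have hc' : c = a ∨ c = b := by
    by_contra h; push_neg at h; exact tri a b c hab ha hb hc h.1 h.2
  have hd' : d = a ∨ d = b := by
    by_contra h; push_neg at h; exact tri a b d hab ha hb hd h.1 h.2
  rcases hc' with rfl | rfl <;> rcases hd' with rfl | rfl
  · exact absurd hcd (G.irrefl)
  · rfl
  · exact Sym2.eq_swap
  · exact absurd hcd (G.irrefl)

lemma cliquefree_card_le_cover [Fintype V] [DecidableEq V] (G : SimpleGraph V)
    [DecidableRel G.Adj] (hcf : G.CliqueFree 3) {𝒞 : Finset (Finset V)}
    (h : IsEdgeCliqueCover G 𝒞) : G.edgeFinset.card ≤ 𝒞.card := by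
  classical
  obtain ⟨hclq, hcov⟩ := h
  have hex : ∀ e ∈ G.edgeFinset, ∃ K, K ∈ 𝒞 ∧ ∀ x ∈ e, x ∈ K := by
    intro e
    induction e using Sym2.ind with
    | _ a b =>
      intro he
      have hab : G.Adj a b := by simpa using he
      obtain ⟨K, hK, haK, hbK⟩ := hcov a b hab
      refine ⟨K, hK, fun x hx => ?_⟩
      rcases Sym2.mem_iff.1 hx with rfl | rfl <;> assumption
  set F : Sym2 V → Finset V :=
    fun e => if he : ∃ K, K ∈ 𝒞 ∧ ∀ x ∈ e, x ∈ K then he.choose else ∅ with hF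
  have hFspec : ∀ e ∈ G.edgeFinset, F e ∈ 𝒞 ∧ ∀ x ∈ e, x ∈ F e := by
    intro e he
    have hx := hex e he
    rw [hF]
    simp only [dif_pos hx]
    exact hx.choose_spec
  apply Finset.card_le_card_of_injOn F (fun e he => (hFspec e he).1)
  intro e₁ h₁ e₂ h₂ hFeq
  obtain ⟨hK₁, hmem₁⟩ := hFspec e₁ h₁
  obtain ⟨hK₂, hmem₂⟩ := hFspec e₂ h₂
  rw [hFeq] at hmem₁
  clear hK₁ hFeq
  revert h₁ h₂ hmem₁ hmem₂
  induction e₁ using Sym2.ind with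
  | _ a b =>
    induction e₂ using Sym2.ind with
    | _ c d =>
      intro h₁ h₂ hmem₁ hmem₂
      have hab : G.Adj a b := by simpa using h₁
      have hcd : G.Adj c d := by simpa using h₂
      exact no_two_edges G hcf (hclq _ hK₂) hab hcd
        (hmem₁ a (Sym2.mem_mk_left a b)) (hmem₁ b (Sym2.mem_mk_right a b))
        (hmem₂ c (Sym2.mem_mk_left c d)) (hmem₂ d (Sym2.mem_mk_right c d))

lemma cliquefree_theta [Fintype V] [DecidableEq V] (G : SimpleGraph V) [DecidableRel G.Adj]
    (hcf : G.CliqueFree 3) : edgeCliqueCoverNumber G = G.edgeFinset.card := by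
  apply le_antisymm
  · exact (ecc_le G (edge_cover G).1).trans (edge_cover G).2
  · obtain ⟨𝒞, hC, hCc⟩ := exists_ecc_cover G ⟨_, (edge_cover G).1⟩
    rw [← hCc]
    exact cliquefree_card_le_cover G hcf hC

lemma iso_small [Fintype V] (G : SimpleGraph V) (h : Fintype.card V ≤ 1) :
    Nonempty (G ≃g SimpleGraph.turanGraph (Fintype.card V) 2) := by
  have hsub : Subsingleton V := Fintype.card_le_one_iff_subsingleton.1 h
  have hsub2 : Subsingleton (Fin (Fintype.card V)) :=
    Fintype.card_le_one_iff_subsingleton.1 (by simpa using h)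
  refine ⟨⟨Fintype.equivFin V, ?_⟩⟩
  intro a b
  constructor
  · intro h'
    have hab : (Fintype.equivFin V) a = (Fintype.equivFin V) b := Subsingleton.elim _ _
    rw [hab] at h'
    exact absurd h' ((turanGraph _ 2).irrefl)
  · intro h'
    have hab : a = b := Subsingleton.elim _ _
    rw [hab] at h'
    exact absurd h' (G.irrefl)

end Aux

/-- (Erdős–Goodman–Pósa) For every graph `G` on `n` vertices, `θ_e(G) ≤ ⌊n²/4⌋`, with
equality if and only if `G` is isomorphic to the Turán graph `T(n,2)`, the complete
bipartite graph `K_{⌊n/2⌋,⌈n/2⌉}`. -/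
theorem edgeCliqueCoverNumber_le_and_eq_iff {V : Type*} [Fintype V] (G : SimpleGraph V) :
    edgeCliqueCoverNumber G ≤ (Fintype.card V) ^ 2 / 4 ∧
      (edgeCliqueCoverNumber G = (Fintype.card V) ^ 2 / 4 ↔
        Nonempty (G ≃g SimpleGraph.turanGraph (Fintype.card V) 2)) := by
  classical
  obtain ⟨⟨𝒞₀, hC₀, hC₀c⟩, htri⟩ := cover_exists (Fintype.card V) V G rfl
  have hle : edgeCliqueCoverNumber G ≤ (Fintype.card V) ^ 2 / 4 :=
    (ecc_le G hC₀).trans hC₀c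
  refine ⟨hle, ?_, ?_⟩
  · intro heq
    by_cases hn1 : Fintype.card V ≤ 1
    · exact iso_small G hn1
    · have hcf : G.CliqueFree 3 := by
        by_contra hncf
        rw [SimpleGraph.CliqueFree] at hncf
        push_neg at hncf
        obtain ⟨t, ht⟩ := hncf
        obtain ⟨a, b, c, hab, hac, hbc, -⟩ := SimpleGraph.is3Clique_iff.1 ht
        obtain ⟨𝒞, hC, hCc⟩ := htri a b c hab hac hbc
        have := ecc_le G hC
        omega
      letI : DecidableRel G.Adj := Classical.decRel _
      have hθ := cliquefree_theta G hcf
      have hedges : G.edgeFinset.card = (Fintype.card V) ^ 2 / 4 := by rw [← hθ, heq]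
      have hmax : G.IsTuranMaximal 2 := by
        refine ⟨hcf, ?_⟩
        intro H _ hHcf
        have h1 : edgeCliqueCoverNumber H ≤ (Fintype.card V) ^ 2 / 4 := by
          obtain ⟨⟨𝒟, hD, hDc⟩, -⟩ := cover_exists (Fintype.card V) V H rfl
          exact (ecc_le H hD).trans hDc
        rw [cliquefree_theta H hHcf] at h1
        rw [hedges]
        exact h1
      exact (SimpleGraph.isTuranMaximal_iff_nonempty_iso_turanGraph (by norm_num)).1 hmax
  · rintro ⟨f⟩
    have hcf : G.CliqueFree 3 :=
      SimpleGraph.CliqueFree.comap f.toEmbedding.isContained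
        (SimpleGraph.turanGraph_cliqueFree (by norm_num))
    letI : DecidableRel G.Adj := Classical.decRel _
    rw [cliquefree_theta G hcf, f.card_edgeFinset_eq, turan2_card_edges]
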